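/- For real σ, ρ, the squared modulus of the factor χ(s) = 2·Γ(s)·cos(πs/2)/(2π)^s at s = σ + iρ equals (2π)^{1−2σ}·(cosh(πρ)/π)·|Γ(σ+iρ)|²·(1 + cos(πσ)/cosh(πρ)), provided σ + iρ is not a nonpositive integer. -/

import Mathlib

open Complex Real

theorem abs_chi_sq (σ ρ : ℝ) (h : ∀ n : ℕ, (σ : ℂ) + I * ρ ≠ -n) :
    ‖(2 * Complex.Gamma ((σ : ℂ) + I * ρ) *
        Complex.cos (π * ((σ : ℂ) + I * ρ) / 2) / (2 * π) ^ ((σ : ℂ) + I * ρ) : ℂ)‖ ^ 2 =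
      (2 * π) ^ (1 - 2 * σ) * (Real.cosh (π * ρ) / π) *
        ‖Complex.Gamma ((σ : ℂ) + I * ρ)‖ ^ 2 *
        (1 + Real.cos (π * σ) / Real.cosh (π * ρ)) := by
  have hπ : (0:ℝ) < π := Real.pi_pos
  have h2π : (0:ℝ) < 2*π := by linarith
  have hC : (0:ℝ) < Real.cosh (π*ρ) := Real.cosh_pos _
  set G := ‖Complex.Gamma ((σ : ℂ) + I * ρ)‖ with hG
  set A := (2*π:ℝ) ^ σ with hA
  have hA0 : 0 < A := Real.rpow_pos_of_pos h2π σ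
  have hpow : ‖(2 * (π:ℂ)) ^ ((σ:ℂ) + I * ρ)‖ = A := by
    rw [show (2 * (π:ℂ)) = ((2*π:ℝ):ℂ) by push_cast; ring,
      Complex.norm_cpow_eq_rpow_re_of_pos h2π]
    simp [hA]
  have harg : π * ((σ:ℂ) + I * ρ) / 2 = Complex.mk (π*σ/2) (π*ρ/2) := by
    apply Complex.ext <;> simp <;> ring
  have hcos : ‖Complex.cos (π * ((σ:ℂ) + I * ρ)/2)‖ ^ 2
      = (Real.cosh (π*ρ) + Real.cos (π*σ))/2 := by
    rw [Complex.sq_norm, harg, Complex.cos_eq]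
    rw [show (Complex.mk (π*σ/2) (π*ρ/2)).re = π*σ/2 from rfl,
        show (Complex.mk (π*σ/2) (π*ρ/2)).im = π*ρ/2 from rfl,
        ← Complex.ofReal_cos, ← Complex.ofReal_sin, ← Complex.ofReal_cosh,
        ← Complex.ofReal_sinh]
    rw [show ((Real.cos (π*σ/2) : ℂ) * (Real.cosh (π*ρ/2) : ℂ) -
        (Real.sin (π*σ/2) : ℂ) * (Real.sinh (π*ρ/2) : ℂ) * I)
        = ((Real.cos (π*σ/2) * Real.cosh (π*ρ/2) : ℝ) : ℂ) +
          ((-(Real.sin (π*σ/2) * Real.sinh (π*ρ/2)) : ℝ) : ℂ) * I by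
      push_cast; ring, Complex.normSq_add_mul_I]
    have h1 : Real.cosh (π*ρ) = 2 * Real.cosh (π*ρ/2)^2 - 1 := by
      have ht := Real.cosh_two_mul (π*ρ/2)
      rw [show 2*(π*ρ/2) = π*ρ by ring] at ht
      have := Real.cosh_sq (π*ρ/2); linarith
    have h2 : Real.cos (π*σ) = 2 * Real.cos (π*σ/2)^2 - 1 := by
      have := Real.cos_two_mul (π*σ/2)
      rw [show 2*(π*σ/2) = π*σ by ring] at this; linarith
    have h3 := Real.sin_sq_add_cos_sq (π*σ/2)
    have h4 := Real.cosh_sq (π*ρ/2)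
    nlinarith [h1, h2, h3, h4]
  rw [norm_div, norm_mul, norm_mul, hpow, div_pow, mul_pow, mul_pow, hcos]
  simp only [Complex.norm_two]
  have hA2 : (2*π:ℝ) ^ (1 - 2*σ) = (2*π) / A^2 := by
    have hAs : A^2 = (2*π:ℝ)^(2*σ) := by
      rw [hA, ← Real.rpow_natCast ((2*π:ℝ)^σ) 2, ← Real.rpow_mul h2π.le]
      norm_num [mul_comm]
    rw [Real.rpow_sub h2π, Real.rpow_one, hAs]
  rw [hA2]
  field_simp
  ring
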